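/- Suppose ℓ : [0,T] × ℝ → ℝ (possibly random) is bi-Lipschitz in x: there exist constants 0 < c ≤ C such that almost surely, for all t ∈ [0,T] and x,y ∈ ℝ, c|x-y| ≤ |ℓ(t,x) - ℓ(t,y)| ≤ C|x-y|, and ℓ(t,·) is strictly increasing with E[ℓ(t,∞)] > 0. Define L_t(X) = inf{x ≥ 0 : E[ℓ(t, x+X)] ≥ 0} for square-integrable X. Then for all square-integrable X, Y and all t, |L_t(X) - L_t(Y)| ≤ (C/c) · E[|X - Y|]. -/

import Mathlib

open MeasureTheory Set

private lemma aux_one_side {Ω : Type*} [MeasurableSpace Ω] (μ : Measure Ω)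
    [IsProbabilityMeasure μ] (c C : ℝ) (hc : 0 < c) (hcC : c ≤ C)
    (f : ℝ → Ω → ℝ)
    (hbi : ∀ᵐ ω ∂μ, ∀ x y : ℝ,
      c * |x - y| ≤ |f x ω - f y ω| ∧ |f x ω - f y ω| ≤ C * |x - y|)
    (hm : ∀ᵐ ω ∂μ, StrictMono (fun x => f x ω))
    (X Y : Ω → ℝ)
    (hintX : ∀ x : ℝ, Integrable (fun ω => f (x + X ω) ω) μ)
    (hintY : ∀ x : ℝ, Integrable (fun ω => f (x + Y ω) ω) μ)
    (hXY : Integrable (fun ω => |X ω - Y ω|) μ)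
    (hneY : {x : ℝ | 0 ≤ x ∧ 0 ≤ ∫ ω, f (x + Y ω) ω ∂μ}.Nonempty) :
    sInf {x : ℝ | 0 ≤ x ∧ 0 ≤ ∫ ω, f (x + X ω) ω ∂μ}
      ≤ sInf {x : ℝ | 0 ≤ x ∧ 0 ≤ ∫ ω, f (x + Y ω) ω ∂μ}
        + (C / c) * ∫ ω, |X ω - Y ω| ∂μ := by
  set I : ℝ := ∫ ω, |X ω - Y ω| ∂μ with hIdef
  have hI : 0 ≤ I := integral_nonneg fun ω => abs_nonneg _
  set d : ℝ := (C / c) * I with hddef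
  have hd : 0 ≤ d := mul_nonneg (div_nonneg (le_trans hc.le hcC) hc.le) hI
  have hcd : c * d = C * I := by
    rw [hddef]; field_simp
  have hbddX : BddBelow {x : ℝ | 0 ≤ x ∧ 0 ≤ ∫ ω, f (x + X ω) ω ∂μ} :=
    ⟨0, fun x hx => hx.1⟩
  -- main step: for y in S_Y, y + d ∈ S_X
  have key : ∀ y ∈ {x : ℝ | 0 ≤ x ∧ 0 ≤ ∫ ω, f (x + Y ω) ω ∂μ},
      y + d ∈ {x : ℝ | 0 ≤ x ∧ 0 ≤ ∫ ω, f (x + X ω) ω ∂μ} := by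
    rintro y ⟨hy0, hyI⟩
    refine ⟨by linarith, ?_⟩
    have hpt : ∀ᵐ ω ∂μ, f (y + Y ω) ω + (c * d - C * |X ω - Y ω|)
        ≤ f (y + d + X ω) ω := by
      filter_upwards [hbi, hm] with ω hb hmω
      have h1 := (hb (y + d + X ω) (y + d + Y ω)).2
      have he1 : |y + d + X ω - (y + d + Y ω)| = |X ω - Y ω| := by
        ring_nf
      rw [he1] at h1
      have h2 := (hb (y + d + Y ω) (y + Y ω)).1
      have he2 : |y + d + Y ω - (y + Y ω)| = d := by
        rw [show y + d + Y ω - (y + Y ω) = d by ring, abs_of_nonneg hd]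
      rw [he2] at h2
      have hmon : f (y + Y ω) ω ≤ f (y + d + Y ω) ω := by
        have := hmω.monotone (show y + Y ω ≤ y + d + Y ω by linarith)
        simpa using this
      have h2' : c * d ≤ f (y + d + Y ω) ω - f (y + Y ω) ω := by
        rw [abs_of_nonneg (by linarith)] at h2; linarith
      have h1' := (abs_le.mp h1).1
      linarith
    have hint1 : Integrable
        (fun ω => f (y + Y ω) ω + (c * d - C * |X ω - Y ω|)) μ :=
      (hintY y).add ((integrable_const (c * d)).sub (hXY.const_mul C))
    have hint2 : Integrable (fun ω => f (y + d + X ω) ω) μ := hintX (y + d)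
    have hle := integral_mono_ae hint1 hint2 hpt
    have e1 := integral_add (hintY y)
      ((integrable_const (c * d)).sub (hXY.const_mul C))
    have e2 := integral_sub (integrable_const (c * d)) (hXY.const_mul C)
    simp only [integral_const, integral_const_mul, measure_univ, probReal_univ,
      ENNReal.toReal_one, smul_eq_mul, one_mul] at e2
    simp only [Pi.sub_apply] at e1
    rw [e1, e2, ← hIdef] at hle
    linarith
  have h1 : sInf {x : ℝ | 0 ≤ x ∧ 0 ≤ ∫ ω, f (x + X ω) ω ∂μ} - d
      ≤ sInf {x : ℝ | 0 ≤ x ∧ 0 ≤ ∫ ω, f (x + Y ω) ω ∂μ} := by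
    apply le_csInf hneY
    intro y hy
    have := csInf_le hbddX (key y hy)
    linarith
  linarith

/-- If the (random) running loss function `ℓ` is bi-Lipschitz in `x`
with constants `0 < c ≤ C`, strictly increasing in `x`, and such that the sets
defining the operator `L_t` are nonempty (well-posedness, coming from
`E[ℓ(t,∞)] > 0`), then `L_t` is Lipschitz with constant `C/c` with respect to
the `L¹`-distance: `|L_t(X) - L_t(Y)| ≤ (C/c) E[|X - Y|]`. -/
theorem stmt1 {Ω : Type*} [MeasurableSpace Ω] (μ : Measure Ω) [IsProbabilityMeasure μ]
    (T : ℝ) (hT : 0 < T) (c C : ℝ) (hc : 0 < c) (hcC : c ≤ C)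
    (ℓ : ℝ → ℝ → Ω → ℝ)
    (hbiLip : ∀ᵐ ω ∂μ, ∀ t ∈ Icc 0 T, ∀ x y : ℝ,
      c * |x - y| ≤ |ℓ t x ω - ℓ t y ω| ∧ |ℓ t x ω - ℓ t y ω| ≤ C * |x - y|)
    (hmono : ∀ᵐ ω ∂μ, ∀ t ∈ Icc 0 T, StrictMono (fun x => ℓ t x ω))
    (X Y : Ω → ℝ) (hX : MemLp X 2 μ) (hY : MemLp Y 2 μ)
    (hintX : ∀ t ∈ Icc 0 T, ∀ x : ℝ, Integrable (fun ω => ℓ t (x + X ω) ω) μ)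
    (hintY : ∀ t ∈ Icc 0 T, ∀ x : ℝ, Integrable (fun ω => ℓ t (x + Y ω) ω) μ)
    (hXY : Integrable (fun ω => |X ω - Y ω|) μ)
    (hneX : ∀ t ∈ Icc 0 T,
      {x : ℝ | 0 ≤ x ∧ 0 ≤ ∫ ω, ℓ t (x + X ω) ω ∂μ}.Nonempty)
    (hneY : ∀ t ∈ Icc 0 T,
      {x : ℝ | 0 ≤ x ∧ 0 ≤ ∫ ω, ℓ t (x + Y ω) ω ∂μ}.Nonempty) :
    ∀ t ∈ Icc 0 T,
      |sInf {x : ℝ | 0 ≤ x ∧ 0 ≤ ∫ ω, ℓ t (x + X ω) ω ∂μ}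
        - sInf {x : ℝ | 0 ≤ x ∧ 0 ≤ ∫ ω, ℓ t (x + Y ω) ω ∂μ}|
        ≤ (C / c) * ∫ ω, |X ω - Y ω| ∂μ := by
  intro t ht
  have hbi' : ∀ᵐ ω ∂μ, ∀ x y : ℝ,
      c * |x - y| ≤ |ℓ t x ω - ℓ t y ω| ∧ |ℓ t x ω - ℓ t y ω| ≤ C * |x - y| := by
    filter_upwards [hbiLip] with ω h using h t ht
  have hm' : ∀ᵐ ω ∂μ, StrictMono (fun x => ℓ t x ω) := by
    filter_upwards [hmono] with ω h using h t ht
  have hXY' : Integrable (fun ω => |Y ω - X ω|) μ := by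
    simpa [abs_sub_comm] using hXY
  have hIeq : (∫ ω, |Y ω - X ω| ∂μ) = ∫ ω, |X ω - Y ω| ∂μ := by
    simp [abs_sub_comm]
  have h1 := aux_one_side μ c C hc hcC (fun x ω => ℓ t x ω) hbi' hm' X Y
    (hintX t ht) (hintY t ht) hXY (hneY t ht)
  have h2 := aux_one_side μ c C hc hcC (fun x ω => ℓ t x ω) hbi' hm' Y X
    (hintY t ht) (hintX t ht) hXY' (hneX t ht)
  rw [hIeq] at h2
  rw [abs_sub_le_iff]
  constructor <;> linarith
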